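/- For nonnegative integers s₁, …, s_r (r ≥ 1), define the polylogarithm at negative indices Li^-_{s₁,…,s_r}(z) = Σ_{n₁>…>n_r>0} n₁^{s₁}⋯n_r^{s_r} z^{n₁} for |z| < 1 (with Li^- of the empty index equal to the constant function 1), and let θ₀ be the operator (θ₀ f)(z) = z·f'(z) and λ(z) = z/(1−z). Then for every z with |z| < 1, Li^-_{s₁,s₂,…,s_r}(z) = θ₀^{s₁}( λ · Li^-_{s₂,…,s_r} )(z), i.e. Li^-_{s₁,…,s_r} is obtained by applying s₁ times the operator f ↦ z f'(z) to the function z ↦ (z/(1−z))·Li^-_{s₂,…,s_r}(z). -/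

import Mathlib

/-- The polylogarithm at nonnegative integer multi-indices (polylogarithm "at negative
indices") `Li⁻_{s₁,…,s_r}(z) = Σ_{n₁>…>n_r>0} n₁^{s₁}⋯n_r^{s_r} z^{n₁}`; for `r = 0`
(the empty index) it is the constant function `1`. -/
noncomputable def LiNeg (r : ℕ) (s : Fin r → ℕ) (z : ℂ) : ℂ :=
  ∑' n : {n : Fin r → ℕ // StrictAnti n ∧ ∀ i, 0 < n i},
    (∏ i, ((n.1 i : ℂ)) ^ (s i)) * (if h : 0 < r then z ^ (n.1 ⟨0, h⟩) else 1)

/-- The differential operator `θ₀ : f ↦ (z ↦ z·f'(z))`. -/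
noncomputable def theta0 (f : ℂ → ℂ) : ℂ → ℂ := fun z => z * deriv f z

namespace LiNegAux

abbrev Chain (r : ℕ) := {n : Fin r → ℕ // StrictAnti n ∧ ∀ i, 0 < n i}

lemma chain_le {r : ℕ} (c : Chain (r + 1)) (i : Fin (r + 1)) : c.1 i ≤ c.1 0 :=
  c.2.1.antitone (Fin.zero_le i)

lemma liNeg_succ (r : ℕ) (S : Fin (r + 1) → ℕ) (z : ℂ) :
    LiNeg (r + 1) S z = ∑' c : Chain (r + 1), (∏ i, ((c.1 i : ℂ)) ^ (S i)) * z ^ (c.1 0) := by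
  unfold LiNeg
  refine tsum_congr fun c => ?_
  rw [dif_pos (Nat.succ_pos r)]
  rfl

/-- cardinality of a fiber of `c ↦ c 0` inside any finset of chains. -/
lemma card_fiber_le {r : ℕ} (F : Finset (Chain (r + 1))) (b : ℕ) :
    (F.filter fun c => c.1 0 = b).card ≤ b ^ r := by
  classical
  have h := Finset.card_le_card_of_injOn
      (f := fun c : Chain (r + 1) => fun i : Fin r => c.1 i.succ)
      (s := F.filter fun c => c.1 0 = b)
      (t := Fintype.piFinset fun _ : Fin r => Finset.range b)
      (fun c hc => by
        rcases Finset.mem_filter.1 hc with ⟨-, hc0⟩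
        refine Fintype.mem_piFinset.2 fun i => Finset.mem_range.2 ?_
        have h1 : c.1 i.succ < c.1 0 := c.2.1 (Fin.succ_pos i)
        show c.1 i.succ < b
        omega)
      (by
        intro c hc d hd hcd
        rcases Finset.mem_filter.1 hc with ⟨-, hc0⟩
        rcases Finset.mem_filter.1 hd with ⟨-, hd0⟩
        refine Subtype.ext (funext fun i => ?_)
        refine Fin.cases ?_ (fun j => ?_) i
        · rw [hc0, hd0]
        · exact congrFun hcd j)
  simpa using h

lemma summable_aux (r K : ℕ) {ρ : ℝ} (h0 : 0 ≤ ρ) (h1 : ρ < 1) :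
    Summable fun c : Chain (r + 1) => ((c.1 0 : ℝ)) ^ K * ρ ^ (c.1 0) := by
  classical
  have hsum : Summable fun n : ℕ => (n : ℝ) ^ (K + r) * ρ ^ n :=
    summable_pow_mul_geometric_of_norm_lt_one (K + r)
      (by rwa [Real.norm_eq_abs, abs_of_nonneg h0])
  have hnn : ∀ n : ℕ, 0 ≤ (n : ℝ) ^ (K + r) * ρ ^ n := fun n => by positivity
  have hnn2 : (0 : Chain (r + 1) → ℝ) ≤ fun c => ((c.1 0 : ℝ)) ^ K * ρ ^ (c.1 0) :=
    fun c => by positivity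
  refine summable_of_sum_le hnn2 (c := ∑' n : ℕ, (n : ℝ) ^ (K + r) * ρ ^ n) ?_
  intro F
  have step1 := Finset.sum_comp (s := F) (fun b : ℕ => (b : ℝ) ^ K * ρ ^ b)
      (fun c : Chain (r + 1) => c.1 0)
  rw [step1]
  refine le_trans (Finset.sum_le_sum ?_) (Summable.sum_le_tsum _ (fun n _ => hnn n) hsum)
  intro b _
  rw [nsmul_eq_mul]
  have h2 : ((F.filter fun c : Chain (r + 1) => c.1 0 = b).card : ℝ) ≤ (b : ℝ) ^ r := by
    exact_mod_cast card_fiber_le F b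
  have h3 : ((F.filter fun c : Chain (r + 1) => c.1 0 = b).card : ℝ) * ((b : ℝ) ^ K * ρ ^ b)
      ≤ (b : ℝ) ^ (K + r) * ρ ^ b := by
    calc ((F.filter fun c : Chain (r + 1) => c.1 0 = b).card : ℝ) * ((b : ℝ) ^ K * ρ ^ b)
        ≤ (b : ℝ) ^ r * ((b : ℝ) ^ K * ρ ^ b) :=
          mul_le_mul_of_nonneg_right h2 (by positivity)
      _ = (b : ℝ) ^ (K + r) * ρ ^ b := by rw [pow_add]; ring
  exact h3

lemma prod_le {r : ℕ} (S : Fin (r + 1) → ℕ) (c : Chain (r + 1)) :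
    ∏ i, ((c.1 i : ℝ)) ^ (S i) ≤ ((c.1 0 : ℝ)) ^ (∑ i, S i) := by
  rw [← Finset.prod_pow_eq_pow_sum]
  refine Finset.prod_le_prod (fun i _ => by positivity) (fun i _ => ?_)
  exact pow_le_pow_left₀ (by positivity) (by exact_mod_cast chain_le c i) _

lemma summable_norm (r : ℕ) (S : Fin (r + 1) → ℕ) {ρ : ℝ} (h0 : 0 ≤ ρ) (h1 : ρ < 1) :
    Summable fun c : Chain (r + 1) => (∏ i, ((c.1 i : ℝ)) ^ (S i)) * ρ ^ (c.1 0) := by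
  refine Summable.of_nonneg_of_le (fun c => by positivity) (fun c => ?_)
    (summable_aux r (∑ i, S i) h0 h1)
  exact mul_le_mul_of_nonneg_right (prod_le S c) (by positivity)

lemma summable_main (r : ℕ) (S : Fin (r + 1) → ℕ) {z : ℂ} (hz : ‖z‖ < 1) :
    Summable fun c : Chain (r + 1) => (∏ i, ((c.1 i : ℂ)) ^ (S i)) * z ^ (c.1 0) := by
  refine Summable.of_norm ?_
  have : ∀ c : Chain (r + 1),
      ‖(∏ i, ((c.1 i : ℂ)) ^ (S i)) * z ^ (c.1 0)‖
        = (∏ i, ((c.1 i : ℝ)) ^ (S i)) * (‖z‖) ^ (c.1 0) := by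
    intro c
    simp [norm_mul, norm_prod, norm_pow, Complex.norm_natCast]
  rw [funext this]
  exact summable_norm r S (norm_nonneg z) hz

/-- The bound on inner indices for appending a new largest index. -/
def bnd {r : ℕ} (m : Chain r) : ℕ := if h : 0 < r then m.1 ⟨0, h⟩ else 0

lemma dite_eq_pow_bnd {r : ℕ} (m : Chain r) (z : ℂ) :
    (if h : 0 < r then z ^ (m.1 ⟨0, h⟩) else 1) = z ^ bnd m := by
  unfold bnd
  split <;> simp

/-- Chains of length `r+1` are pairs of a chain of length `r` and a new strictly
larger top entry. -/
noncomputable def chainEquiv (r : ℕ) :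
    Chain (r + 1) ≃ Σ m : Chain r, {n : ℕ // bnd m < n} where
  toFun c :=
    ⟨⟨fun i => c.1 i.succ,
      fun i j hij => c.2.1 (Fin.succ_lt_succ_iff.2 hij),
      fun i => c.2.2 _⟩,
     ⟨c.1 0, by
        unfold bnd
        split
        · exact c.2.1 (Fin.succ_pos _)
        · exact c.2.2 0⟩⟩
  invFun p :=
    ⟨Fin.cons p.2.1 p.1.1, by
      intro i j hij
      cases j using Fin.cases with
      | zero => exact absurd hij (by simp)
      | succ j' =>
        cases i using Fin.cases with
        | zero =>
          simp only [Fin.cons_succ, Fin.cons_zero]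
          have hr : 0 < r := j'.pos
          have h1 : p.1.1 j' ≤ p.1.1 ⟨0, hr⟩ :=
            p.1.2.1.antitone (by simp [Fin.le_def])
          have h2 : bnd p.1 = p.1.1 ⟨0, hr⟩ := dif_pos hr
          have h3 := p.2.2
          omega
        | succ i' =>
          simp only [Fin.cons_succ]
          exact p.1.2.1 (Fin.succ_lt_succ_iff.mp hij), by
      intro i
      refine Fin.cases ?_ (fun i' => ?_) i
      · simp only [Fin.cons_zero]
        have := p.2.2; omega
      · simp only [Fin.cons_succ]
        exact p.1.2.2 i'⟩
  left_inv c := Subtype.ext (Fin.cons_self_tail c.1)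
  right_inv p := by
    rcases p with ⟨⟨m, hm⟩, ⟨n, hn⟩⟩
    rfl

def tailEquiv (b : ℕ) : ℕ ≃ {n : ℕ // b < n} where
  toFun k := ⟨b + 1 + k, by omega⟩
  invFun n := n.1 - (b + 1)
  left_inv k := by simp
  right_inv n := Subtype.ext (by have := n.2; simp; omega)

lemma geom_tail {b : ℕ} {z : ℂ} (hz : ‖z‖ < 1) :
    ∑' n : {n : ℕ // b < n}, z ^ (n : ℕ) = z ^ (b + 1) * (1 - z)⁻¹ := by
  rw [← Equiv.tsum_eq (tailEquiv b) (fun n : {n : ℕ // b < n} => z ^ (n : ℕ))]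
  have h1 : ∀ k : ℕ, z ^ ((tailEquiv b k : ℕ)) = z ^ (b + 1) * z ^ k := by
    intro k
    show z ^ (b + 1 + k) = z ^ (b + 1) * z ^ k
    rw [pow_add]
  rw [funext h1, tsum_mul_left, tsum_geometric_of_norm_lt_one
    hz]

lemma liNeg_cons_zero (r : ℕ) (s : Fin r → ℕ) (z : ℂ) (hz : ‖z‖ < 1) :
    LiNeg (r + 1) (Fin.cons 0 s) z = z / (1 - z) * LiNeg r s z := by
  rw [liNeg_succ]
  set f : (Σ m : Chain r, {n : ℕ // bnd m < n}) → ℂ :=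
    fun p => (∏ i, ((p.1.1 i : ℂ)) ^ (s i)) * z ^ (p.2.1 : ℕ) with hf
  have he : ∀ c : Chain (r + 1),
      (∏ i, ((c.1 i : ℂ)) ^ (Fin.cons 0 s i)) * z ^ (c.1 0) = f (chainEquiv r c) := by
    intro c
    simp only [hf, chainEquiv, Equiv.coe_fn_mk, Fin.prod_univ_succ, Fin.cons_zero,
      Fin.cons_succ, pow_zero, one_mul]
  rw [tsum_congr he, Equiv.tsum_eq (chainEquiv r) f]
  have hsummable : Summable f := by
    have h1 := summable_main r (Fin.cons 0 s) hz
    have h2 := (Equiv.summable_iff (chainEquiv r) (f := f)).2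
    apply ((Equiv.summable_iff (chainEquiv r)).1 ?_)
    rwa [show (f ∘ chainEquiv r) = fun c : Chain (r + 1) =>
      (∏ i, ((c.1 i : ℂ)) ^ (Fin.cons 0 s i)) * z ^ (c.1 0) from funext fun c => (he c).symm]
  rw [Summable.tsum_sigma hsummable]
  unfold LiNeg
  rw [← tsum_mul_left]
  refine tsum_congr fun m => ?_
  have : ∑' n : {n : ℕ // bnd m < n}, f ⟨m, n⟩
      = (∏ i, ((m.1 i : ℂ)) ^ (s i)) * (z ^ (bnd m + 1) * (1 - z)⁻¹) := by
    rw [hf]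
    simp only
    rw [tsum_mul_left, geom_tail hz]
  rw [this, dite_eq_pow_bnd m z, pow_succ, div_eq_mul_inv]
  ring

lemma liNeg_cons_succ (r t : ℕ) (s : Fin r → ℕ) (z : ℂ) (hz : ‖z‖ < 1) :
    LiNeg (r + 1) (Fin.cons (t + 1) s) z
      = z * deriv (fun w => LiNeg (r + 1) (Fin.cons t s) w) z := by
  classical
  set S : Fin (r + 1) → ℕ := Fin.cons t s with hS
  set ρ : ℝ := (1 + ‖z‖) / 2 with hρ
  have habs : 0 ≤ ‖z‖ := norm_nonneg z
  have hρ0 : (0 : ℝ) < ρ := by rw [hρ]; linarith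
  have hρhalf : (1 : ℝ) / 2 ≤ ρ := by rw [hρ]; linarith
  have hρ1 : ρ < 1 := by rw [hρ]; linarith
  have hzρ : ‖z‖ < ρ := by rw [hρ]; linarith
  set A : Chain (r + 1) → ℂ := fun c => ∏ i, ((c.1 i : ℂ)) ^ (S i) with hA
  set u : Chain (r + 1) → ℝ :=
    fun c => (∏ i, ((c.1 i : ℝ)) ^ (S i)) * ((c.1 0 : ℝ) * ρ ^ (c.1 0 - 1)) with hu
  have hnormA : ∀ c, ‖A c‖ = ∏ i, ((c.1 i : ℝ)) ^ (S i) := by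
    intro c
    simp [hA, norm_prod, norm_pow, Complex.norm_natCast]
  have hρpow : ∀ c : Chain (r + 1), ρ ^ (c.1 0 - 1) ≤ 2 * ρ ^ (c.1 0) := by
    intro c
    have hc0 : 0 < c.1 0 := c.2.2 0
    have h1 : ρ ^ (c.1 0) = ρ ^ (c.1 0 - 1) * ρ := by
      rw [← pow_succ]
      congr 1
      omega
    have h2 : 0 ≤ ρ ^ (c.1 0 - 1) := by positivity
    nlinarith [h2, hρhalf]
  have husum : Summable u := by
    refine Summable.of_nonneg_of_le (fun c => by positivity) (fun c => ?_)
      ((summable_aux r (∑ i, S i + 1) hρ0.le hρ1).mul_left 2)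
    have h1 : (∏ i, ((c.1 i : ℝ)) ^ (S i)) * (c.1 0 : ℝ)
        ≤ ((c.1 0 : ℝ)) ^ (∑ i, S i + 1) := by
      rw [pow_succ]
      exact mul_le_mul_of_nonneg_right (prod_le S c) (by positivity)
    calc u c ≤ (∏ i, ((c.1 i : ℝ)) ^ (S i)) * ((c.1 0 : ℝ) * (2 * ρ ^ (c.1 0))) := by
          refine mul_le_mul_of_nonneg_left ?_ (by positivity)
          exact mul_le_mul_of_nonneg_left (hρpow c) (by positivity)
      _ ≤ 2 * (((c.1 0 : ℝ)) ^ (∑ i, S i + 1) * ρ ^ (c.1 0)) := by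
          have := mul_le_mul_of_nonneg_right h1 (show (0:ℝ) ≤ 2 * ρ ^ (c.1 0) by positivity)
          nlinarith [this]
  have hmemz : z ∈ Metric.ball (0 : ℂ) ρ := by
    simpa [Metric.mem_ball, Complex.dist_eq] using hzρ
  have hderiv : ∀ (c : Chain (r + 1)) (w : ℂ), w ∈ Metric.ball (0 : ℂ) ρ →
      HasDerivAt (fun w => A c * w ^ (c.1 0))
        (A c * ((c.1 0 : ℂ) * w ^ (c.1 0 - 1))) w := by
    intro c w _
    exact (hasDerivAt_pow (c.1 0) w).const_mul (A c)
  have hbound : ∀ (c : Chain (r + 1)) (w : ℂ), w ∈ Metric.ball (0 : ℂ) ρ →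
      ‖A c * ((c.1 0 : ℂ) * w ^ (c.1 0 - 1))‖ ≤ u c := by
    intro c w hw
    have hwρ : ‖w‖ ≤ ρ := by
      rw [Metric.mem_ball, dist_zero_right] at hw
      exact hw.le
    have : ‖A c * ((c.1 0 : ℂ) * w ^ (c.1 0 - 1))‖
        = ‖A c‖ * ((c.1 0 : ℝ) * ‖w‖ ^ (c.1 0 - 1)) := by
      simp [norm_mul, norm_pow, Complex.norm_natCast]
    rw [this, hnormA, hu]
    refine mul_le_mul_of_nonneg_left ?_ (by positivity)
    refine mul_le_mul_of_nonneg_left ?_ (by positivity)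
    exact pow_le_pow_left₀ (norm_nonneg w) hwρ _
  have hg0 : Summable fun c : Chain (r + 1) => A c * z ^ (c.1 0) :=
    summable_main r S hz
  have H := hasDerivAt_tsum_of_isPreconnected husum Metric.isOpen_ball
    (convex_ball (0 : ℂ) ρ).isPreconnected hderiv hbound hmemz hg0 hmemz
  have hfun : (fun w => LiNeg (r + 1) S w) = fun w => ∑' c : Chain (r + 1), A c * w ^ (c.1 0) :=
    funext fun w => liNeg_succ r S w
  have hderiveq : deriv (fun w => LiNeg (r + 1) S w) z
      = ∑' c : Chain (r + 1), A c * ((c.1 0 : ℂ) * z ^ (c.1 0 - 1)) := by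
    rw [hfun]
    exact H.deriv
  rw [liNeg_succ, hderiveq, ← tsum_mul_left]
  refine tsum_congr fun c => ?_
  have hc0 : 0 < c.1 0 := c.2.2 0
  have hzpow : z ^ (c.1 0) = z ^ (c.1 0 - 1) * z := by
    rw [← pow_succ]
    congr 1
    omega
  rw [hA]
  simp only [hS, Fin.prod_univ_succ, Fin.cons_zero, Fin.cons_succ]
  rw [hzpow, pow_succ]
  ring

end LiNegAux

/-- For nonnegative integers `s₁, …, s_r` and `|z| < 1`,
`Li⁻_{s₁,s₂,…,s_r}(z) = θ₀^{s₁}(λ · Li⁻_{s₂,…,s_r})(z)`, where `λ(z) = z/(1−z)`. -/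
theorem liNeg_cons_eq_theta0_iter_lambda_mul
    (r : ℕ) (s₁ : ℕ) (s : Fin r → ℕ) (z : ℂ) (hz : ‖z‖ < 1) :
    LiNeg (r + 1) (Fin.cons s₁ s) z =
      (theta0^[s₁] fun w => w / (1 - w) * LiNeg r s w) z := by
  induction s₁ generalizing z with
  | zero =>
    simp only [Function.iterate_zero, id_eq]
    exact LiNegAux.liNeg_cons_zero r s z hz
  | succ t ih =>
    rw [Function.iterate_succ_apply']
    show _ = z * deriv (theta0^[t] fun w => w / (1 - w) * LiNeg r s w) z
    have hmem : Metric.ball (0 : ℂ) 1 ∈ nhds z :=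
      Metric.isOpen_ball.mem_nhds (by simpa [Metric.mem_ball, Complex.dist_eq] using hz)
    have heq : deriv (theta0^[t] fun w => w / (1 - w) * LiNeg r s w) z
        = deriv (fun w => LiNeg (r + 1) (Fin.cons t s) w) z := by
      apply Filter.EventuallyEq.deriv_eq
      filter_upwards [hmem] with w hw
      have hw1 : ‖w‖ < 1 := by
        simpa [Metric.mem_ball, Complex.dist_eq] using hw
      exact (ih w hw1).symm
    rw [heq]
    exact LiNegAux.liNeg_cons_succ r t s z hz
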